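/- For any X ∈ B(H) and any ν ∈ [0,1], w(X + (1−2ν)X*) ≤ ((1+|1−2ν|)/2)·(‖X‖ + w(X̃)), where X̃ = |X|^{1/2} V |X|^{1/2} is the Aluthge transform of X with X = V|X| the polar decomposition. -/

import Mathlib

set_option synthInstance.maxHeartbeats 1000000
set_option maxHeartbeats 1000000

open scoped InnerProductSpace

/-- Numerical radius of a bounded operator on a complex Hilbert space. -/
noncomputable def numRad {H : Type*} [NormedAddCommGroup H] [InnerProductSpace ℂ H]
    (T : H →L[ℂ] H) : ℝ :=
  ⨆ z : {z : H // ‖z‖ = 1}, ‖(⟪T z.1, z.1⟫_ℂ : ℂ)‖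

/-- Crawford number. -/
noncomputable def crawford {H : Type*} [NormedAddCommGroup H] [InnerProductSpace ℂ H]
    (T : H →L[ℂ] H) : ℝ :=
  ⨅ z : {z : H // ‖z‖ = 1}, ‖(⟪T z.1, z.1⟫_ℂ : ℂ)‖

/-- The 2×2 block operator matrix `[[A, B], [C, D]]` acting on `H ⊕ H`
(the ℓ² direct sum `WithLp 2 (H × H)`), sending `(x, y)` to `(Ax + By, Cx + Dy)`. -/
noncomputable def blk {H : Type*} [NormedAddCommGroup H] [InnerProductSpace ℂ H]
    (A B C D : H →L[ℂ] H) : WithLp 2 (H × H) →L[ℂ] WithLp 2 (H × H) :=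
  (((WithLp.prodContinuousLinearEquiv 2 ℂ H H).symm.toContinuousLinearMap).comp
    (((A.comp (ContinuousLinearMap.fst ℂ H H) + B.comp (ContinuousLinearMap.snd ℂ H H)).prod
      (C.comp (ContinuousLinearMap.fst ℂ H H) + D.comp (ContinuousLinearMap.snd ℂ H H))))).comp
    ((WithLp.prodContinuousLinearEquiv 2 ℂ H H).toContinuousLinearMap)

section Aux

variable {H : Type*} [NormedAddCommGroup H] [InnerProductSpace ℂ H]

lemma aux_numRad_nonneg (T : H →L[ℂ] H) : 0 ≤ numRad T :=
  Real.iSup_nonneg fun _ => norm_nonneg _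

lemma aux_inner_le_numRad (T : H →L[ℂ] H) {x : H} (hx : ‖x‖ = 1) :
    ‖(⟪T x, x⟫_ℂ : ℂ)‖ ≤ numRad T := by
  have hb : BddAbove (Set.range fun z : {z : H // ‖z‖ = 1} => ‖(⟪T z.1, z.1⟫_ℂ : ℂ)‖) := by
    refine ⟨‖T‖, ?_⟩
    rintro _ ⟨y, rfl⟩
    calc ‖(⟪T y.1, y.1⟫_ℂ : ℂ)‖ ≤ ‖T y.1‖ * ‖y.1‖ := norm_inner_le_norm _ _
      _ ≤ (‖T‖ * ‖y.1‖) * ‖y.1‖ := by gcongr; exact T.le_opNorm _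
      _ = ‖T‖ := by rw [y.2]; ring
  exact le_ciSup hb (⟨x, hx⟩ : {z : H // ‖z‖ = 1})

lemma aux_inner_star_apply [CompleteSpace H] (A : H →L[ℂ] H) (x : H) :
    (⟪(star A) x, x⟫_ℂ : ℂ) = (starRingEnd ℂ) (⟪A x, x⟫_ℂ : ℂ) := by
  rw [ContinuousLinearMap.star_eq_adjoint, ContinuousLinearMap.adjoint_inner_left,
    ← inner_conj_symm]

lemma aux_inner_star_mul_apply [CompleteSpace H] (B : H →L[ℂ] H) (x : H) :
    (⟪(star B * B) x, x⟫_ℂ : ℂ) = ((‖B x‖ : ℝ) : ℂ)^2 := by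
  rw [ContinuousLinearMap.mul_apply, ContinuousLinearMap.star_eq_adjoint,
    ContinuousLinearMap.adjoint_inner_left]
  exact inner_self_eq_norm_sq_to_K (𝕜 := ℂ) (B x)

lemma aux_inner_mul_star_apply [CompleteSpace H] (A : H →L[ℂ] H) (x : H) :
    (⟪(A * star A) x, x⟫_ℂ : ℂ) = ((‖(star A) x‖ : ℝ) : ℂ)^2 := by
  have := aux_inner_star_mul_apply (star A) x
  rwa [star_star] at this

/-- For a self-adjoint operator, the norm is bounded by any bound on the numerical range. -/
lemma aux_sa_norm_le [CompleteSpace H] {R : H →L[ℂ] H} (hR : IsSelfAdjoint R) {M : ℝ}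
    (hM : 0 ≤ M) (h : ∀ y : H, ‖y‖ = 1 → ‖(⟪R y, y⟫_ℂ : ℂ)‖ ≤ M) : ‖R‖ ≤ M := by
  have hadj : ContinuousLinearMap.adjoint R = R := hR.adjoint_eq
  have h2 : ∀ w : H, ‖(⟪R w, w⟫_ℂ : ℂ)‖ ≤ M * ‖w‖ ^ 2 := by
    intro w
    rcases eq_or_ne w 0 with rfl | hw
    · simp
    · have hnw : (0:ℝ) < ‖w‖ := norm_pos_iff.2 hw
      have hu : ‖((‖w‖⁻¹ : ℝ) : ℂ) • w‖ = 1 := by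
        rw [norm_smul]
        simp [abs_of_nonneg (le_of_lt (inv_pos.2 hnw)), inv_mul_cancel₀ (ne_of_gt hnw)]
      have hkey := h _ hu
      have hval : (⟪R (((‖w‖⁻¹ : ℝ) : ℂ) • w), ((‖w‖⁻¹ : ℝ) : ℂ) • w⟫_ℂ : ℂ)
          = ((‖w‖⁻¹ : ℝ) : ℂ) * ((‖w‖⁻¹ : ℝ) : ℂ) * ⟪R w, w⟫_ℂ := by
        rw [map_smul, inner_smul_left, inner_smul_right, Complex.conj_ofReal]
        ring
      rw [hval] at hkey
      rw [norm_mul, norm_mul] at hkey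
      simp only [Complex.norm_real, Real.norm_eq_abs,
        abs_of_nonneg (le_of_lt (inv_pos.2 hnw))] at hkey
      have h3 : ‖w‖⁻¹ * ‖w‖⁻¹ * ‖(⟪R w, w⟫_ℂ : ℂ)‖ ≤ M := hkey
      have h4 : (0:ℝ) < ‖w‖ * ‖w‖ := mul_pos hnw hnw
      calc ‖(⟪R w, w⟫_ℂ : ℂ)‖ = (‖w‖ * ‖w‖) * (‖w‖⁻¹ * ‖w‖⁻¹ * ‖(⟪R w, w⟫_ℂ : ℂ)‖) := by
            field_simp
        _ ≤ (‖w‖ * ‖w‖) * M := mul_le_mul_of_nonneg_left h3 (le_of_lt h4)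
        _ = M * ‖w‖ ^ 2 := by ring
  -- polarization bound
  have h4 : ∀ x y : H, (⟪R x, y⟫_ℂ : ℂ).re ≤ M / 2 * (‖x‖ ^ 2 + ‖y‖ ^ 2) := by
    intro x y
    have hsym : (⟪R y, x⟫_ℂ : ℂ) = (starRingEnd ℂ) (⟪R x, y⟫_ℂ : ℂ) := by
      conv_lhs => rw [← hadj]
      rw [ContinuousLinearMap.adjoint_inner_left, ← inner_conj_symm]
    have hexp : (⟪R (x + y), x + y⟫_ℂ : ℂ) - ⟪R (x - y), x - y⟫_ℂ
        = 2 * (⟪R x, y⟫_ℂ + ⟪R y, x⟫_ℂ) := by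
      rw [map_add, map_sub, inner_add_left, inner_add_right, inner_add_right,
        inner_sub_left, inner_sub_right, inner_sub_right]
      ring
    have h5 : (⟪R (x + y), x + y⟫_ℂ : ℂ) - ⟪R (x - y), x - y⟫_ℂ
        = ((4 * (⟪R x, y⟫_ℂ : ℂ).re : ℝ) : ℂ) := by
      rw [hexp, hsym, Complex.add_conj]
      push_cast
      ring
    have hre : (⟪R (x + y), x + y⟫_ℂ : ℂ).re - (⟪R (x - y), x - y⟫_ℂ : ℂ).re
        = 4 * (⟪R x, y⟫_ℂ : ℂ).re := by
      have := congrArg Complex.re h5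
      simpa [Complex.sub_re] using this
    have b1 : (⟪R (x + y), x + y⟫_ℂ : ℂ).re ≤ M * ‖x + y‖ ^ 2 :=
      le_trans (Complex.re_le_norm _) (le_trans (le_of_eq rfl) (h2 _))
    have b2 : -(⟪R (x - y), x - y⟫_ℂ : ℂ).re ≤ M * ‖x - y‖ ^ 2 := by
      have := abs_le.1 (le_trans (Complex.abs_re_le_norm _)
        (le_trans (le_of_eq rfl) (h2 (x - y))))
      linarith [this.1]
    have hpar : ‖x + y‖ * ‖x + y‖ + ‖x - y‖ * ‖x - y‖ = 2 * (‖x‖ * ‖x‖ + ‖y‖ * ‖y‖) :=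
      by have := parallelogram_law_with_norm ℂ x y; simpa only [sq] using this
    nlinarith [hre, b1, b2, hpar]
  refine R.opNorm_le_bound hM ?_
  intro x
  rcases eq_or_ne (R x) 0 with hRx | hRx
  · rw [hRx, norm_zero]; positivity
  · have hx : x ≠ 0 := by
      intro hx0; rw [hx0, map_zero] at hRx; exact hRx rfl
    have hnx : (0:ℝ) < ‖x‖ := norm_pos_iff.2 hx
    have hnRx : (0:ℝ) < ‖R x‖ := norm_pos_iff.2 hRx
    set t : ℝ := Real.sqrt (‖R x‖ / ‖x‖) with ht
    have ht0 : 0 < t := Real.sqrt_pos.2 (div_pos hnRx hnx)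
    have ht2 : t ^ 2 = ‖R x‖ / ‖x‖ := Real.sq_sqrt (le_of_lt (div_pos hnRx hnx))
    have hval : (⟪R ((t : ℂ) • x), ((t⁻¹ : ℝ) : ℂ) • (R x)⟫_ℂ : ℂ)
        = ((t : ℝ) : ℂ) * ((t⁻¹ : ℝ) : ℂ) * ⟪R x, R x⟫_ℂ := by
      rw [map_smul, inner_smul_left, inner_smul_right, Complex.conj_ofReal]
      ring
    have hre : (⟪R ((t : ℂ) • x), ((t⁻¹ : ℝ) : ℂ) • (R x)⟫_ℂ : ℂ).re = ‖R x‖ ^ 2 := by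
      rw [hval, inner_self_eq_norm_sq_to_K]
      have he : ((t : ℝ) : ℂ) * ((t⁻¹ : ℝ) : ℂ) = 1 := by
        rw [← Complex.ofReal_mul, mul_inv_cancel₀ (ne_of_gt ht0), Complex.ofReal_one]
      rw [he, one_mul]
      simp [← Complex.ofReal_pow]
    have hb := h4 ((t : ℂ) • x) (((t⁻¹ : ℝ) : ℂ) • (R x))
    rw [hre] at hb
    have hn1 : ‖(t : ℂ) • x‖ ^ 2 = t ^ 2 * ‖x‖ ^ 2 := by
      rw [norm_smul]
      simp [Complex.norm_real, Real.norm_eq_abs, abs_of_nonneg (le_of_lt ht0), mul_pow]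
    have hn2 : ‖((t⁻¹ : ℝ) : ℂ) • (R x)‖ ^ 2 = (t ^ 2)⁻¹ * ‖R x‖ ^ 2 := by
      rw [norm_smul]
      simp [Complex.norm_real, Real.norm_eq_abs, abs_of_nonneg (le_of_lt (inv_pos.2 ht0)),
        mul_pow, inv_pow]
    rw [hn1, hn2, ht2] at hb
    have hfin : ‖R x‖ ^ 2 ≤ M * (‖x‖ * ‖R x‖) := by
      have e1 : ‖R x‖ / ‖x‖ * ‖x‖ ^ 2 = ‖x‖ * ‖R x‖ := by
        field_simp
      have e2 : (‖R x‖ / ‖x‖)⁻¹ * ‖R x‖ ^ 2 = ‖x‖ * ‖R x‖ := by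
        rw [inv_div]; field_simp
      rw [e1, e2] at hb
      linarith
    nlinarith [hfin, hnRx, hnx]

end Aux

section Key

variable {H : Type*} [NormedAddCommGroup H] [InnerProductSpace ℂ H] [CompleteSpace H]

lemma aux_key (X V : H →L[ℂ] H)
    (hV : X = V * CFC.sqrt (star X * X))
    (hV' : star V * X = CFC.sqrt (star X * X)) :
    numRad X ≤ (‖X‖ + numRad (CFC.sqrt (CFC.sqrt (star X * X)) * V *
      CFC.sqrt (CFC.sqrt (star X * X)))) / 2 := by
  set m : H →L[ℂ] H := CFC.sqrt (star X * X) with hmdef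
  set s : H →L[ℂ] H := CFC.sqrt m with hsdef
  set T : H →L[ℂ] H := s * V * s with hTdef
  have hmX : (0 : H →L[ℂ] H) ≤ star X * X := star_mul_self_nonneg X
  have hm0 : (0 : H →L[ℂ] H) ≤ m := CFC.sqrt_nonneg _
  have hs0 : (0 : H →L[ℂ] H) ≤ s := CFC.sqrt_nonneg _
  have hm_sa : star m = m := IsSelfAdjoint.of_nonneg hm0
  have hs_sa : star s = s := IsSelfAdjoint.of_nonneg hs0
  have hss : s * s = m := CFC.sqrt_mul_sqrt_self m hm0
  have hmm : m * m = star X * X := CFC.sqrt_mul_sqrt_self _ hmX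
  have hVVm : star V * V * m = m := by rw [mul_assoc, ← hV]; exact hV'
  have hVVs : star V * V * s = s := by
    have hA : (star V * V - 1) * m = 0 := by rw [sub_mul, one_mul, hVVm, sub_self]
    have h1 : ((star V * V - 1) * s) * star ((star V * V - 1) * s) = 0 := by
      have e : ((star V * V - 1) * s) * star ((star V * V - 1) * s)
          = ((star V * V - 1) * m) * star (star V * V - 1) := by
        rw [star_mul, hs_sa, ← hss]; noncomm_ring
      rw [e, hA, zero_mul]
    have h2 : star ((star V * V - 1) * s) = 0 := by
      have hn : ‖star ((star V * V - 1) * s)‖ * ‖star ((star V * V - 1) * s)‖ = 0 := by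
        rw [← CStarRing.norm_star_mul_self, star_star, h1, norm_zero]
      exact norm_eq_zero.1 (mul_self_eq_zero.1 hn)
    have h3 : (star V * V - 1) * s = 0 := by
      rw [← star_star ((star V * V - 1) * s), h2, star_zero]
    have h4 : star V * V * s - s = 0 := by
      have e : star V * V * s - s = (star V * V - 1) * s := by noncomm_ring
      rw [e, h3]
    exact sub_eq_zero.1 h4
  have hnm : ‖m‖ = ‖X‖ := by
    have h1 : ‖m‖ * ‖m‖ = ‖X‖ * ‖X‖ := by
      calc ‖m‖ * ‖m‖ = ‖star m * m‖ := CStarRing.norm_star_mul_self.symm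
        _ = ‖star X * X‖ := by rw [hm_sa, hmm]
        _ = ‖X‖ * ‖X‖ := CStarRing.norm_star_mul_self
    exact (mul_self_inj_of_nonneg (norm_nonneg _) (norm_nonneg _)).1 h1
  have hT_bound : ∀ u : ℂ, ‖u‖ = 1 → ‖u • T + star (u • T)‖ ≤ 2 * numRad T := by
    intro u hu1
    have hRsa : IsSelfAdjoint (u • T + star (u • T)) := by
      simp only [IsSelfAdjoint, star_add, star_star]
      exact add_comm _ _
    refine aux_sa_norm_le hRsa (mul_nonneg (by norm_num) (aux_numRad_nonneg T)) ?_
    intro y hy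
    have hval : (⟪(u • T + star (u • T)) y, y⟫_ℂ : ℂ)
        = (starRingEnd ℂ) u * ⟪T y, y⟫_ℂ
          + (starRingEnd ℂ) ((starRingEnd ℂ) u * ⟪T y, y⟫_ℂ) := by
      rw [ContinuousLinearMap.add_apply, inner_add_left, aux_inner_star_apply,
        ContinuousLinearMap.smul_apply, inner_smul_left]
    rw [hval]
    set w : ℂ := (starRingEnd ℂ) u * ⟪T y, y⟫_ℂ with hwdef
    have hnw : ‖w‖ = ‖(⟪T y, y⟫_ℂ : ℂ)‖ := by
      rw [hwdef, norm_mul, RCLike.norm_conj, hu1, one_mul]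
    calc ‖w + (starRingEnd ℂ) w‖ = ‖((2 * w.re : ℝ) : ℂ)‖ := by rw [Complex.add_conj]
      _ = |2 * w.re| := by rw [Complex.norm_real, Real.norm_eq_abs]
      _ ≤ 2 * ‖w‖ := by
          rw [abs_mul, abs_two]
          have := Complex.abs_re_le_norm w
          linarith
      _ = 2 * ‖(⟪T y, y⟫_ℂ : ℂ)‖ := by rw [hnw]
      _ ≤ 2 * numRad T := by
          have := aux_inner_le_numRad T hy
          linarith
  have keybound : ∀ x : H, ‖x‖ = 1 → ‖(⟪X x, x⟫_ℂ : ℂ)‖ ≤ (‖X‖ + numRad T) / 2 := by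
    intro x hx
    set z : ℂ := ⟪X x, x⟫_ℂ with hzdef
    obtain ⟨u, hu1, huz⟩ : ∃ u : ℂ, ‖u‖ = 1 ∧ (starRingEnd ℂ) u * z = ((‖z‖ : ℝ) : ℂ) := by
      rcases eq_or_ne z 0 with h0 | h0
      · exact ⟨1, by simp, by simp [h0]⟩
      · refine ⟨z / ((‖z‖ : ℝ) : ℂ), ?_, ?_⟩
        · rw [norm_div, Complex.norm_real, Real.norm_eq_abs, abs_of_nonneg (norm_nonneg z),
            div_self (norm_ne_zero_iff.2 h0)]
        · rw [map_div₀, Complex.conj_ofReal, div_mul_eq_mul_div]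
          have hzz : (starRingEnd ℂ) z * z = ((‖z‖ ^ 2 : ℝ) : ℂ) := by
            rw [mul_comm, Complex.mul_conj]
            norm_cast
            rw [Complex.normSq_eq_norm_sq]
          rw [hzz, ← Complex.ofReal_div]
          congr 1
          rw [sq]
          field_simp
      -- end obtain
    set U : H →L[ℂ] H := u • V with hUdef
    have hUX : U * m = u • X := by
      rw [hV, hUdef]; exact smul_mul_assoc u V m
    set S : H →L[ℂ] H := (U + 1) * s with hSdef
    set W : H →L[ℂ] H := (U - 1) * s with hWdef
    set D : H →L[ℂ] H := U * m + m * star U with hDdef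
    have eS : S * star S = (U + 1) * m * (star U + 1) := by
      rw [hSdef, star_mul, hs_sa, star_add, star_one, ← hss]; noncomm_ring
    have eW : W * star W = (U - 1) * m * (star U - 1) := by
      rw [hWdef, star_mul, hs_sa, star_sub, star_one, ← hss]; noncomm_ring
    have hPQ : S * star S - W * star W = D + D := by
      rw [eS, eW, hDdef]; noncomm_ring
    have hUU : star U * U = star V * V := by
      rw [hUdef, star_smul, smul_mul_smul_comm]
      have huu : (starRingEnd ℂ) u * u = 1 := by
        rw [mul_comm, Complex.mul_conj]
        norm_cast
        rw [Complex.normSq_eq_norm_sq, hu1, one_pow]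
      rw [RCLike.star_def, huu, one_smul]
    have hstarSS : star S * S = m + m + (u • T + star (u • T)) := by
      rw [hSdef, star_mul, hs_sa, star_add, star_one]
      have expand : s * (star U + 1) * ((U + 1) * s)
          = s * (star U * U) * s + s * star U * s + s * U * s + s * s := by noncomm_ring
      rw [expand, hUU, hss]
      have h1 : s * (star V * V) * s = m := by rw [mul_assoc, hVVs, hss]
      have h2 : s * U * s = u • T := by
        rw [hUdef, hTdef, mul_smul_comm, smul_mul_assoc]
      have h3 : s * star U * s = star (u • T) := by
        rw [hUdef, hTdef, star_smul, star_smul, mul_smul_comm, smul_mul_assoc]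
        congr 1
        rw [star_mul, star_mul, hs_sa]
        noncomm_ring
      rw [h1, h2, h3]
      abel
    have hQ : (⟪(W * star W) x, x⟫_ℂ : ℂ) = ((‖(star W) x‖ : ℝ) : ℂ)^2 :=
      aux_inner_mul_star_apply W x
    have hP : (⟪(S * star S) x, x⟫_ℂ : ℂ) = ((‖(star S) x‖ : ℝ) : ℂ)^2 :=
      aux_inner_mul_star_apply S x
    have hDx : (⟪D x, x⟫_ℂ : ℂ) = 2 * ((‖z‖ : ℝ) : ℂ) := by
      have hms : m * star U = star (U * m) := by rw [star_mul, hm_sa]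
      rw [hDdef, hms, ContinuousLinearMap.add_apply, inner_add_left, aux_inner_star_apply,
        hUX, ContinuousLinearMap.smul_apply, inner_smul_left, ← hzdef, huz,
        Complex.conj_ofReal]
      ring
    have hPQx : ((‖(star S) x‖ : ℝ) : ℂ)^2 - ((‖(star W) x‖ : ℝ) : ℂ)^2
        = 4 * ((‖z‖ : ℝ) : ℂ) := by
      calc ((‖(star S) x‖ : ℝ) : ℂ)^2 - ((‖(star W) x‖ : ℝ) : ℂ)^2
          = (⟪(S * star S) x, x⟫_ℂ : ℂ) - ⟪(W * star W) x, x⟫_ℂ := by rw [hP, hQ]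
        _ = ⟪(S * star S - W * star W) x, x⟫_ℂ := by
            rw [ContinuousLinearMap.sub_apply, inner_sub_left]
        _ = ⟪(D + D) x, x⟫_ℂ := by rw [hPQ]
        _ = (⟪D x, x⟫_ℂ : ℂ) + ⟪D x, x⟫_ℂ := by
            rw [ContinuousLinearMap.add_apply, inner_add_left]
        _ = 4 * ((‖z‖ : ℝ) : ℂ) := by rw [hDx]; ring
    have hreal : ‖(star S) x‖^2 - ‖(star W) x‖^2 = 4 * ‖z‖ := by
      exact_mod_cast hPQx
    have hSx : ‖(star S) x‖^2 ≤ 2 * ‖X‖ + 2 * numRad T := by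
      have h1 : ‖(star S) x‖ ≤ ‖S‖ := by
        calc ‖(star S) x‖ ≤ ‖star S‖ * ‖x‖ := (star S).le_opNorm x
          _ = ‖S‖ := by rw [hx, norm_star, mul_one]
      have h2 : ‖S‖^2 = ‖star S * S‖ := by
        rw [CStarRing.norm_star_mul_self, sq]
      have h3 : ‖star S * S‖ ≤ 2 * ‖X‖ + 2 * numRad T := by
        rw [hstarSS]
        calc ‖m + m + (u • T + star (u • T))‖
            ≤ ‖m + m‖ + ‖u • T + star (u • T)‖ := norm_add_le _ _
          _ ≤ (‖m‖ + ‖m‖) + 2 * numRad T := add_le_add (norm_add_le _ _) (hT_bound u hu1)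
          _ = 2 * ‖X‖ + 2 * numRad T := by rw [hnm]; ring
      calc ‖(star S) x‖^2 ≤ ‖S‖^2 := by
            exact pow_le_pow_left₀ (norm_nonneg _) h1 2
        _ = ‖star S * S‖ := h2
        _ ≤ 2 * ‖X‖ + 2 * numRad T := h3
    nlinarith [sq_nonneg ‖(star W) x‖, hreal, hSx]
  refine Real.iSup_le ?_ ?_
  · rintro ⟨x, hx⟩
    exact keybound x hx
  · have h1 := aux_numRad_nonneg T
    have h2 := norm_nonneg X
    linarith

end Key

theorem numRad_skew_le_aluthge {H : Type*} [NormedAddCommGroup H] [InnerProductSpace ℂ H]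
    [CompleteSpace H] {ν : ℝ} (hν : ν ∈ Set.Icc (0 : ℝ) 1) (X V : H →L[ℂ] H)
    (hV : X = V * CFC.sqrt (star X * X))
    (hV' : star V * X = CFC.sqrt (star X * X)) :
    numRad (X + ((1 - 2*ν : ℝ) : ℂ) • X.adjoint) ≤
      ((1 + |1 - 2*ν|) / 2) *
        (‖X‖ + numRad (CFC.sqrt (CFC.sqrt (star X * X)) * V *
          CFC.sqrt (CFC.sqrt (star X * X)))) := by
  set c : ℝ := 1 - 2*ν with hcdef
  set T : H →L[ℂ] H := CFC.sqrt (CFC.sqrt (star X * X)) * V * CFC.sqrt (CFC.sqrt (star X * X))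
    with hTdef
  have hkey : numRad X ≤ (‖X‖ + numRad T) / 2 := aux_key X V hV hV'
  have h1 : numRad (X + (c : ℂ) • X.adjoint) ≤ (1 + |c|) * numRad X := by
    refine Real.iSup_le ?_ (mul_nonneg (by positivity) (aux_numRad_nonneg X))
    rintro ⟨x, hx⟩
    have hval : (⟪(X + (c : ℂ) • X.adjoint) x, x⟫_ℂ : ℂ)
        = ⟪X x, x⟫_ℂ + (c : ℂ) * (starRingEnd ℂ) (⟪X x, x⟫_ℂ : ℂ) := by
      rw [ContinuousLinearMap.add_apply, inner_add_left, ContinuousLinearMap.smul_apply,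
        inner_smul_left, Complex.conj_ofReal, ContinuousLinearMap.adjoint_inner_left,
        inner_conj_symm]
    calc ‖(⟪(X + (c : ℂ) • X.adjoint) x, x⟫_ℂ : ℂ)‖
        = ‖(⟪X x, x⟫_ℂ : ℂ) + (c : ℂ) * (starRingEnd ℂ) (⟪X x, x⟫_ℂ : ℂ)‖ := by rw [hval]
      _ ≤ ‖(⟪X x, x⟫_ℂ : ℂ)‖ + ‖(c : ℂ) * (starRingEnd ℂ) (⟪X x, x⟫_ℂ : ℂ)‖ := norm_add_le _ _
      _ = ‖(⟪X x, x⟫_ℂ : ℂ)‖ + |c| * ‖(⟪X x, x⟫_ℂ : ℂ)‖ := by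
          rw [norm_mul, RCLike.norm_conj, Complex.norm_real, Real.norm_eq_abs]
      _ = (1 + |c|) * ‖(⟪X x, x⟫_ℂ : ℂ)‖ := by ring
      _ ≤ (1 + |c|) * numRad X := by
          have := aux_inner_le_numRad X hx
          have hc : (0:ℝ) ≤ 1 + |c| := by positivity
          exact mul_le_mul_of_nonneg_left this hc
  calc numRad (X + (c : ℂ) • X.adjoint) ≤ (1 + |c|) * numRad X := h1
    _ ≤ (1 + |c|) * ((‖X‖ + numRad T) / 2) := by
        have hc : (0:ℝ) ≤ 1 + |c| := by positivity
        exact mul_le_mul_of_nonneg_left hkey hc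
    _ = ((1 + |c|) / 2) * (‖X‖ + numRad T) := by ring
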